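/- Let ξ_1, …, ξ_{k+1} ∈ ℝ with ξ_1 + ⋯ + ξ_{k+1} = 0, and suppose |ξ_i| ∼ N_i with N_1 ≥ N_2 ≥ N_3 ≥ N_4 = max{N_4,…,N_{k+1}} and N_3 ≥ 2^9 k³ N_4. Then the resonance function Ω_k(ξ_1,…,ξ_{k+1}) = ξ_1³ + ⋯ + ξ_{k+1}³ satisfies |Ω_k| ∼ N_1 N_2 N_3; more precisely Ω_k = 3 ξ_1 ξ_2 ξ_3 + O(N_1² N_4), and there exist absolute constants c, C > 0 (depending only on k polynomially) with c N_1N_2N_3 ≤ |Ω_k| ≤ C N_1N_2N_3. -/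

import Mathlib

set_option maxHeartbeats 4000000 in
/-- Resonance estimate: if `ξ₁+⋯+ξ_{k+1} = 0`, `|ξ_i| ∼ N_i` with `N₁ ≥ N₂ ≥ N₃ ≥ N₄ =
max{N₄,…,N_{k+1}}` and `N₃ ≥ 2⁹ k³ N₄`, then `Ω_k = ξ₁³+⋯+ξ_{k+1}³` satisfies
`|Ω_k| ∼ N₁N₂N₃` and `Ω_k = 3ξ₁ξ₂ξ₃ + O(N₁² N₄)`. (Indices are 0-based here.) -/
theorem resonance_estimate (k : ℕ) (hk : 3 ≤ k) :
    ∃ c > 0, ∃ C > 0, ∀ ξ N : Fin (k + 1) → ℝ,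
      (∑ i, ξ i) = 0 →
      (∀ i, N i / 2 ≤ |ξ i| ∧ |ξ i| ≤ 2 * N i) →
      N 1 ≤ N 0 → N 2 ≤ N 1 → N 3 ≤ N 2 →
      (∀ i : Fin (k + 1), 3 ≤ (i : ℕ) → N i ≤ N 3) →
      2 ^ 9 * (k : ℝ) ^ 3 * N 3 ≤ N 2 →
      (c * (N 0 * N 1 * N 2) ≤ |∑ i, ξ i ^ 3| ∧
       |∑ i, ξ i ^ 3| ≤ C * (N 0 * N 1 * N 2) ∧
       |(∑ i, ξ i ^ 3) - 3 * (ξ 0 * ξ 1 * ξ 2)| ≤ C * N 0 ^ 2 * N 3) := by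
  obtain ⟨m, rfl⟩ : ∃ m, k = m + 3 := ⟨k - 3, by omega⟩
  set k : ℕ := m + 3 with hkdef
  refine ⟨1/8, by norm_num, 56 * k, by positivity, ?_⟩
  intro ξ N hsum hN hN10 hN21 hN32 hNtail hgap
  have hkR : (3 : ℝ) ≤ (k : ℝ) := by exact_mod_cast hk
  -- sum splitting
  have h10 : (1 : Fin (m+4)) ≠ 0 := by simp [Fin.ext_iff]
  have h21 : (2 : Fin (m+4)) ≠ 1 := by simp [Fin.ext_iff, Fin.val_two, Nat.mod_eq_of_lt (show 2 < m+4 by omega)]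
  have h20 : (2 : Fin (m+4)) ≠ 0 := by simp [Fin.ext_iff, Fin.val_two, Nat.mod_eq_of_lt (show 2 < m+4 by omega)]
  set s : Finset (Fin (m+4)) := ((Finset.univ.erase 0).erase 1).erase 2 with hs
  have m1 : (1 : Fin (m+4)) ∈ Finset.univ.erase 0 := by simp [Finset.mem_erase, h10]
  have m2 : (2 : Fin (m+4)) ∈ (Finset.univ.erase 0).erase 1 := by
    simp [Finset.mem_erase, h21, h20]
  have hsplit : ∀ f : Fin (m+4) → ℝ, ∑ i, f i = f 0 + f 1 + f 2 + ∑ i ∈ s, f i := by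
    intro f
    rw [hs, ← Finset.add_sum_erase Finset.univ f (Finset.mem_univ 0),
        ← Finset.add_sum_erase _ f m1, ← Finset.add_sum_erase _ f m2]
    ring
  have hcard : s.card = m + 1 := by
    rw [hs, Finset.card_erase_of_mem m2, Finset.card_erase_of_mem m1,
        Finset.card_erase_of_mem (Finset.mem_univ _)]
    simp
  have htail3 : ∀ i ∈ s, (3 : ℕ) ≤ (i : ℕ) := by
    intro i hi
    rw [hs, Finset.mem_erase, Finset.mem_erase, Finset.mem_erase] at hi
    obtain ⟨a2, a1, a0, -⟩ := hi
    have e2 : ((2 : Fin (m+4)) : ℕ) = 2 := Nat.mod_eq_of_lt (show 2 < m+4 by omega)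
    have e1 : ((1 : Fin (m+4)) : ℕ) = 1 := Nat.mod_eq_of_lt (show 1 < m+4 by omega)
    have e0 : ((0 : Fin (m+4)) : ℕ) = 0 := rfl
    have n2 : (i : ℕ) ≠ 2 := fun h => a2 (Fin.ext (h.trans e2.symm))
    have n1 : (i : ℕ) ≠ 1 := fun h => a1 (Fin.ext (h.trans e1.symm))
    have n0 : (i : ℕ) ≠ 0 := fun h => a0 (Fin.ext (h.trans e0.symm))
    omega
  -- nonnegativity of N
  have hNnn : ∀ i, 0 ≤ N i := fun i => by
    have := (hN i).2; have := abs_nonneg (ξ i); linarith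
  have hN3nn : (0:ℝ) ≤ N 3 := hNnn 3
  have hN30 : N 3 ≤ N 0 := le_trans hN32 (le_trans hN21 hN10)
  -- tail bounds
  set T : ℝ := ∑ i ∈ s, ξ i with hT
  set T3 : ℝ := ∑ i ∈ s, ξ i ^ 3 with hT3
  have hTb : |T| ≤ 2 * k * N 3 := by
    calc |T| ≤ ∑ i ∈ s, |ξ i| := Finset.abs_sum_le_sum_abs _ _
    _ ≤ s.card • (2 * N 3) := by
        apply Finset.sum_le_card_nsmul
        intro i hi
        exact le_trans (hN i).2 (by linarith [hNtail i (htail3 i hi)])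
    _ = (m+1 : ℝ) * (2 * N 3) := by rw [hcard]; push_cast [nsmul_eq_mul]; ring
    _ ≤ 2 * k * N 3 := by
        have : ((m:ℝ)+1) ≤ (k:ℝ) := by push_cast [hkdef]; linarith
        nlinarith
  have hT3b : |T3| ≤ k * (8 * N 3 ^ 3) := by
    calc |T3| ≤ ∑ i ∈ s, |ξ i ^ 3| := Finset.abs_sum_le_sum_abs _ _
    _ ≤ s.card • (8 * N 3 ^ 3) := by
        apply Finset.sum_le_card_nsmul
        intro i hi
        have h1 : |ξ i| ≤ 2 * N 3 := le_trans (hN i).2 (by linarith [hNtail i (htail3 i hi)])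
        rw [abs_pow]
        calc |ξ i| ^ 3 ≤ (2 * N 3) ^ 3 := pow_le_pow_left₀ (abs_nonneg _) h1 3
        _ = 8 * N 3 ^ 3 := by ring
    _ = (m+1 : ℝ) * (8 * N 3 ^ 3) := by rw [hcard]; push_cast [nsmul_eq_mul]; ring
    _ ≤ k * (8 * N 3 ^ 3) := by
        have : ((m:ℝ)+1) ≤ (k:ℝ) := by push_cast [hkdef]; linarith
        nlinarith [pow_nonneg hN3nn 3]
  -- basic abs facts
  obtain ⟨h0l, h0u⟩ := hN 0
  obtain ⟨h1l, h1u⟩ := hN 1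
  obtain ⟨h2l, h2u⟩ := hN 2
  have hsum0 : ξ 0 + ξ 1 + ξ 2 + T = 0 := by rw [hT, ← hsplit ξ]; exact hsum
  have hΩ : (∑ i, ξ i ^ 3) = ξ 0 ^ 3 + ξ 1 ^ 3 + ξ 2 ^ 3 + T3 := hsplit (fun i => ξ i ^ 3)
  -- error bound
  set Q : ℝ := ξ 0 ^ 2 + ξ 1 ^ 2 + ξ 2 ^ 2 - ξ 0 * ξ 1 - ξ 1 * ξ 2 - ξ 0 * ξ 2 with hQdef
  have hEid : (∑ i, ξ i ^ 3) - 3 * (ξ 0 * ξ 1 * ξ 2) = -T * Q + T3 := by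
    rw [hΩ, hQdef]
    have : T = -(ξ 0 + ξ 1 + ξ 2) := by linarith
    rw [this]; ring
  have habs0 : |ξ 0| ≤ 2 * N 0 := h0u
  have habs1 : |ξ 1| ≤ 2 * N 0 := le_trans h1u (by linarith)
  have habs2 : |ξ 2| ≤ 2 * N 0 := le_trans h2u (by linarith)
  -- squares and products bounded by 4 N0²
  have hsq : ∀ x : ℝ, |x| ≤ 2 * N 0 → x ^ 2 ≤ 4 * N 0 ^ 2 := by
    intro x hx
    have := abs_le.mp hx
    nlinarith [this.1, this.2]
  have hprodb : ∀ x y : ℝ, |x| ≤ 2 * N 0 → |y| ≤ 2 * N 0 → |x * y| ≤ 4 * N 0 ^ 2 := by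
    intro x y hx hy
    rw [abs_mul]
    calc |x| * |y| ≤ (2 * N 0) * (2 * N 0) :=
      mul_le_mul hx hy (abs_nonneg _) (by linarith [hNnn 0])
    _ = 4 * N 0 ^ 2 := by ring
  have hQb : |Q| ≤ 24 * N 0 ^ 2 := by
    have e0 := hsq _ habs0
    have e1 := hsq _ habs1
    have e2 := hsq _ habs2
    have p01 := abs_le.mp (hprodb _ _ habs0 habs1)
    have p12 := abs_le.mp (hprodb _ _ habs1 habs2)
    have p02 := abs_le.mp (hprodb _ _ habs0 habs2)
    rw [abs_le, hQdef]
    constructor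
    · nlinarith [sq_nonneg (ξ 0), sq_nonneg (ξ 1), sq_nonneg (ξ 2), p01.2, p12.2, p02.2]
    · linarith [p01.1, p12.1, p02.1]
  have hEb : |(∑ i, ξ i ^ 3) - 3 * (ξ 0 * ξ 1 * ξ 2)| ≤ 56 * k * N 0 ^ 2 * N 3 := by
    rw [hEid]
    have hcube : (k:ℝ) * (8 * N 3 ^ 3) ≤ 8 * k * N 0 ^ 2 * N 3 := by
      have key : (0:ℝ) ≤ (k:ℝ) * N 3 * ((N 0 - N 3) * (N 0 + N 3)) := by
        apply mul_nonneg (mul_nonneg (by linarith) hN3nn)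
        apply mul_nonneg (by linarith) (by linarith)
      linarith [key]
    calc |(-T) * Q + T3| ≤ |(-T) * Q| + |T3| := abs_add_le _ _
    _ = |T| * |Q| + |T3| := by rw [abs_mul, abs_neg]
    _ ≤ (2 * k * N 3) * (24 * N 0 ^ 2) + k * (8 * N 3 ^ 3) := by
        have hm := mul_le_mul hTb hQb (abs_nonneg _) (by positivity)
        linarith [hT3b]
    _ ≤ 56 * k * N 0 ^ 2 * N 3 := by nlinarith [hcube]
  -- N0 controlled by N1
  have hN0N1 : N 0 ≤ (4 * k + 8) * N 1 := by
    have hT1 : |T| ≤ 2 * k * N 1 := le_trans hTb (by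
      nlinarith [mul_nonneg (by linarith : (0:ℝ) ≤ (k:ℝ)) (by linarith : (0:ℝ) ≤ N 1 - N 3)])
    have habs : |ξ 0| ≤ |ξ 1| + |ξ 2| + |T| := by
      have h : ξ 0 = -(ξ 1 + ξ 2 + T) := by linarith
      rw [h, abs_neg]
      calc |ξ 1 + ξ 2 + T| ≤ |ξ 1 + ξ 2| + |T| := abs_add_le _ _
      _ ≤ |ξ 1| + |ξ 2| + |T| := by linarith [abs_add_le (ξ 1) (ξ 2)]
    linarith [hN21, h0l, h1u, h2u, hT1, habs]
  -- error is small compared to N0 N1 N2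
  have hX : (0:ℝ) ≤ N 0 * N 1 * N 2 := by
    have := hNnn 0; have := hNnn 1; have := hNnn 2; positivity
  have hEsmall : 56 * k * N 0 ^ 2 * N 3 ≤ (1/4) * (N 0 * N 1 * N 2) := by
    have h1 : 56 * (k:ℝ) * N 0 ^ 2 * N 3 ≤ (56 * (k:ℝ) * (4 * k + 8)) * (N 0 * N 1 * N 3) := by
      have key : (0:ℝ) ≤ (56 * (k:ℝ) * N 3 * N 0) * ((4 * k + 8) * N 1 - N 0) := by
        apply mul_nonneg
        · apply mul_nonneg (mul_nonneg (by linarith) hN3nn) (hNnn 0)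
        · linarith
      linarith [key]
    have hcoef : (56 * (k:ℝ) * (4 * k + 8)) ≤ (1/4) * (2^9 * (k:ℝ)^3) := by
      linarith [mul_nonneg (mul_nonneg (sub_nonneg.mpr hkR) (sub_nonneg.mpr hkR))
        (by linarith : (0:ℝ) ≤ (k:ℝ)),
        mul_nonneg (sub_nonneg.mpr hkR) (by linarith : (0:ℝ) ≤ (k:ℝ))]
    have hprod : (0:ℝ) ≤ N 0 * N 1 * N 3 := by
      have := hNnn 0; have := hNnn 1; positivity
    have h2 : (56 * (k:ℝ) * (4 * k + 8)) * (N 0 * N 1 * N 3) ≤ (1/4) * (N 0 * N 1 * N 2) := by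
      calc (56 * (k:ℝ) * (4 * k + 8)) * (N 0 * N 1 * N 3)
          ≤ ((1/4) * (2^9 * (k:ℝ)^3)) * (N 0 * N 1 * N 3) := by
            linarith [mul_nonneg hprod (sub_nonneg.mpr hcoef)]
      _ = (1/4) * (N 0 * N 1) * (2^9 * (k:ℝ)^3 * N 3) := by ring
      _ ≤ (1/4) * (N 0 * N 1) * N 2 := by
          have h01 : (0:ℝ) ≤ N 0 * N 1 := mul_nonneg (hNnn 0) (hNnn 1)
          linarith [mul_nonneg h01 (sub_nonneg.mpr hgap)]
      _ = (1/4) * (N 0 * N 1 * N 2) := by ring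
    linarith
  have hEE : |(∑ i, ξ i ^ 3) - 3 * (ξ 0 * ξ 1 * ξ 2)| ≤ (1/4) * (N 0 * N 1 * N 2) :=
    le_trans hEb hEsmall
  refine ⟨?_, ?_, hEb⟩
  · -- lower bound
    have hPlow : 3 * ((N 0/2) * (N 1/2) * (N 2/2)) ≤ |3 * (ξ 0 * ξ 1 * ξ 2)| := by
      have he : |3 * (ξ 0 * ξ 1 * ξ 2)| = 3 * (|ξ 0| * |ξ 1| * |ξ 2|) := by
        rw [abs_mul, abs_mul, abs_mul]; simp [abs_of_nonneg]
      rw [he]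
      have h01 : (N 0/2) * (N 1/2) ≤ |ξ 0| * |ξ 1| :=
        mul_le_mul h0l h1l (by linarith [hNnn 1]) (abs_nonneg _)
      have h012 : (N 0/2) * (N 1/2) * (N 2/2) ≤ |ξ 0| * |ξ 1| * |ξ 2| :=
        mul_le_mul h01 h2l (by linarith [hNnn 2]) (by positivity)
      linarith
    have htri : |3 * (ξ 0 * ξ 1 * ξ 2)| - |(∑ i, ξ i ^ 3) - 3 * (ξ 0 * ξ 1 * ξ 2)|
        ≤ |∑ i, ξ i ^ 3| := by
      have h := abs_sub_abs_le_abs_sub (3 * (ξ 0 * ξ 1 * ξ 2)) (∑ i, ξ i ^ 3)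
      rw [abs_sub_comm] at h
      linarith
    linarith [hPlow, htri, hEE]
  · -- upper bound
    have hPup : |3 * (ξ 0 * ξ 1 * ξ 2)| ≤ 24 * (N 0 * N 1 * N 2) := by
      have he : |3 * (ξ 0 * ξ 1 * ξ 2)| = 3 * (|ξ 0| * |ξ 1| * |ξ 2|) := by
        rw [abs_mul, abs_mul, abs_mul]; simp [abs_of_nonneg]
      rw [he]
      have h01 : |ξ 0| * |ξ 1| ≤ (2 * N 0) * (2 * N 1) :=
        mul_le_mul h0u h1u (abs_nonneg _) (by linarith [hNnn 0])
      have h012 : |ξ 0| * |ξ 1| * |ξ 2| ≤ (2 * N 0) * (2 * N 1) * (2 * N 2) := by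
        apply mul_le_mul h01 h2u (abs_nonneg _)
        have := hNnn 0; have := hNnn 1; positivity
      linarith [h012]
    have htri2 : |∑ i, ξ i ^ 3| ≤
        |3 * (ξ 0 * ξ 1 * ξ 2)| + |(∑ i, ξ i ^ 3) - 3 * (ξ 0 * ξ 1 * ξ 2)| := by
      have h := abs_add_le (3 * (ξ 0 * ξ 1 * ξ 2)) ((∑ i, ξ i ^ 3) - 3 * (ξ 0 * ξ 1 * ξ 2))
      simpa using h
    have hk56 : (25:ℝ) ≤ 56 * (k:ℝ) := by linarith
    linarith [htri2, hPup, hEE, mul_nonneg (sub_nonneg.mpr hk56) hX]
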